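/- The 2×4 matrix [[cos θ, 1, −sin θ, 0], [sin θ, 0, cos θ, 1]] has kernel (as a map ℝ⁴ → ℝ²) equal to the two-dimensional real subspace { (Re(z e^{−iν₁}), Re(z e^{−iν₂}), Re(z e^{−iν₃}), Re(z e^{−iν₄})) : z ∈ ℂ } where (ν₁,ν₂,ν₃,ν₄) = (θ/2, π−θ/2, π/2+θ/2, 3π/2−θ/2). -/
import Mathlib

lemma re_mul_exp (z : ℂ) (ν : ℝ) :
    (z * Complex.exp ((ν : ℂ) * Complex.I)).re = z.re * Real.cos ν - z.im * Real.sin ν := by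
  rw [Complex.exp_mul_I]
  simp [Complex.mul_re, Complex.add_re, Complex.cos_ofReal_re, Complex.sin_ofReal_re,
    Complex.mul_im]

open Real Complex in
theorem kernel_eq_S_holomorphic_space (θ : ℝ) (hθ : θ ∈ Set.Ioo 0 (π / 2)) :
    {x : ℝ × ℝ × ℝ × ℝ |
        Real.cos θ * x.1 + x.2.1 - Real.sin θ * x.2.2.1 = 0 ∧
        Real.sin θ * x.1 + Real.cos θ * x.2.2.1 + x.2.2.2 = 0} =
      {x : ℝ × ℝ × ℝ × ℝ | ∃ z : ℂ,
        x = ((z * Complex.exp (-(θ / 2 : ℝ) * Complex.I)).re,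
             (z * Complex.exp (-(π - θ / 2 : ℝ) * Complex.I)).re,
             (z * Complex.exp (-(π / 2 + θ / 2 : ℝ) * Complex.I)).re,
             (z * Complex.exp (-(3 * π / 2 - θ / 2 : ℝ) * Complex.I)).re)} := by
  have pyth : Real.sin (θ/2) ^ 2 + Real.cos (θ/2) ^ 2 = 1 := Real.sin_sq_add_cos_sq _
  have htwo : (2:ℝ) * (θ/2) = θ := by ring
  have hcos : Real.cos θ = Real.cos (θ/2) ^ 2 - Real.sin (θ/2) ^ 2 := by
    have h := Real.cos_two_mul (θ/2)
    rw [htwo] at h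
    nlinarith [pyth]
  have hsin : Real.sin θ = 2 * Real.sin (θ/2) * Real.cos (θ/2) := by
    have h := Real.sin_two_mul (θ/2)
    rw [htwo] at h; exact h
  have hc1 : Real.cos (-(θ/2)) = Real.cos (θ/2) := Real.cos_neg _
  have hs1 : Real.sin (-(θ/2)) = -Real.sin (θ/2) := Real.sin_neg _
  have hc2 : Real.cos (-(π - θ/2)) = -Real.cos (θ/2) := by
    rw [Real.cos_neg, Real.cos_pi_sub]
  have hs2 : Real.sin (-(π - θ/2)) = -Real.sin (θ/2) := by
    rw [Real.sin_neg, Real.sin_pi_sub]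
  have hc3 : Real.cos (-(π/2 + θ/2)) = -Real.sin (θ/2) := by
    rw [Real.cos_neg, Real.cos_add]
    simp
  have hs3 : Real.sin (-(π/2 + θ/2)) = -Real.cos (θ/2) := by
    rw [Real.sin_neg, Real.sin_add]
    simp
  have hc4 : Real.cos (-(3 * π / 2 - θ/2)) = -Real.sin (θ/2) := by
    rw [Real.cos_neg, show (3 * π / 2 - θ/2 : ℝ) = π + (π/2 - θ/2) by ring,
      Real.cos_add, Real.cos_sub]
    simp
  have hs4 : Real.sin (-(3 * π / 2 - θ/2)) = Real.cos (θ/2) := by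
    rw [Real.sin_neg, show (3 * π / 2 - θ/2 : ℝ) = π + (π/2 - θ/2) by ring,
      Real.sin_add, Real.sin_sub]
    simp
  ext x
  simp only [Set.mem_setOf_eq]
  constructor
  · rintro ⟨h1, h2⟩
    set c := Real.cos (θ/2)
    set s := Real.sin (θ/2)
    refine ⟨Complex.mk (c * x.1 - s * x.2.2.1) (s * x.1 + c * x.2.2.1), ?_⟩
    have hre : (Complex.mk (c * x.1 - s * x.2.2.1) (s * x.1 + c * x.2.2.1)).re
        = c * x.1 - s * x.2.2.1 := rfl
    have him : (Complex.mk (c * x.1 - s * x.2.2.1) (s * x.1 + c * x.2.2.1)).im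
        = s * x.1 + c * x.2.2.1 := rfl
    refine Prod.ext ?_ (Prod.ext ?_ (Prod.ext ?_ ?_)) <;>
      simp only [← Complex.ofReal_neg, re_mul_exp, hre, him, hc1, hs1, hc2, hs2, hc3, hs3, hc4, hs4]
    · linear_combination (-x.1) * pyth
    · linear_combination h1 - x.1 * hcos + x.2.2.1 * hsin
    · linear_combination (-x.2.2.1) * pyth
    · linear_combination h2 - x.1 * hsin - x.2.2.1 * hcos
  · rintro ⟨z, rfl⟩
    simp only [← Complex.ofReal_neg, re_mul_exp, hc1, hs1, hc2, hs2, hc3, hs3, hc4, hs4]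
    set c := Real.cos (θ/2)
    set s := Real.sin (θ/2)
    set a := z.re
    set b := z.im
    constructor
    · linear_combination (a*c + b*s) * hcos + (a*s - b*c) * hsin + (a*c - b*s) * pyth
    · linear_combination (a*c + b*s) * hsin + (b*c - a*s) * hcos + (a*s + b*c) * pyth
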